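/- For generalized barycentric coordinates {λ_i} on a convex polyhedron m in R^3, the identity (1/2) Σ_{i,j,k} λ_i (∇λ_j × ∇λ_k) ((v_j − v_i) × (v_k − v_i))^T = I holds pointwise, where I is the 3×3 identity matrix. -/

import Mathlib

open Matrix BigOperators


lemma gbc_master {N : ℕ} (v g : Fin N → Fin 3 → ℝ) (l : Fin N → ℝ)
    (hsum : ∑ i, l i = 1)
    (hg0 : ∀ p : Fin 3, ∑ i, g i p = 0)
    (hkey : ∀ r p : Fin 3, ∑ i, v i r * g i p = if r = p then (1:ℝ) else 0)
    (p q r s : Fin 3) :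
    ∑ i, ∑ j, ∑ k, l i * (g j p * g k q - g j q * g k p) *
      ((v j r - v i r) * (v k s - v i s) - (v j s - v i s) * (v k r - v i r))
    = 2 * ((if r = p then (1:ℝ) else 0) * (if s = q then 1 else 0)
         - (if r = q then (1:ℝ) else 0) * (if s = p then 1 else 0)) := by
  have hk : ∀ i j : Fin N,
      ∑ k, (g j p * g k q - g j q * g k p) *
        ((v j r - v i r) * (v k s - v i s) - (v j s - v i s) * (v k r - v i r))
      = g j p * (v j r - v i r) * (if s = q then (1:ℝ) else 0)
        - g j p * (v j s - v i s) * (if r = q then (1:ℝ) else 0)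
        - g j q * (v j r - v i r) * (if s = p then (1:ℝ) else 0)
        + g j q * (v j s - v i s) * (if r = p then (1:ℝ) else 0) := by
    intro i j
    have e : ∀ k, (g j p * g k q - g j q * g k p) *
        ((v j r - v i r) * (v k s - v i s) - (v j s - v i s) * (v k r - v i r))
      = (g j p * (v j r - v i r)) * (v k s * g k q)
        - (g j p * (v j r - v i r) * v i s) * g k q
        - (g j p * (v j s - v i s)) * (v k r * g k q)
        + (g j p * (v j s - v i s) * v i r) * g k q
        - (g j q * (v j r - v i r)) * (v k s * g k p)
        + (g j q * (v j r - v i r) * v i s) * g k p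
        + (g j q * (v j s - v i s)) * (v k r * g k p)
        - (g j q * (v j s - v i s) * v i r) * g k p := fun k => by ring
    rw [Finset.sum_congr rfl fun k _ => e k]
    simp only [Finset.sum_add_distrib, Finset.sum_sub_distrib, ← Finset.mul_sum]
    rw [hkey s q, hkey r q, hkey s p, hkey r p, hg0 p, hg0 q]
    ring
  have hj : ∀ i : Fin N,
      ∑ j, (g j p * (v j r - v i r) * (if s = q then (1:ℝ) else 0)
        - g j p * (v j s - v i s) * (if r = q then (1:ℝ) else 0)
        - g j q * (v j r - v i r) * (if s = p then (1:ℝ) else 0)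
        + g j q * (v j s - v i s) * (if r = p then (1:ℝ) else 0))
      = 2 * ((if r = p then (1:ℝ) else 0) * (if s = q then 1 else 0)
           - (if r = q then (1:ℝ) else 0) * (if s = p then 1 else 0)) := by
    intro i
    have e : ∀ j, (g j p * (v j r - v i r) * (if s = q then (1:ℝ) else 0)
        - g j p * (v j s - v i s) * (if r = q then (1:ℝ) else 0)
        - g j q * (v j r - v i r) * (if s = p then (1:ℝ) else 0)
        + g j q * (v j s - v i s) * (if r = p then (1:ℝ) else 0))
      = (if s = q then (1:ℝ) else 0) * (v j r * g j p)
        - ((if s = q then (1:ℝ) else 0) * v i r) * g j p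
        - (if r = q then (1:ℝ) else 0) * (v j s * g j p)
        + ((if r = q then (1:ℝ) else 0) * v i s) * g j p
        - (if s = p then (1:ℝ) else 0) * (v j r * g j q)
        + ((if s = p then (1:ℝ) else 0) * v i r) * g j q
        + (if r = p then (1:ℝ) else 0) * (v j s * g j q)
        - ((if r = p then (1:ℝ) else 0) * v i s) * g j q := fun j => by ring
    rw [Finset.sum_congr rfl fun j _ => e j]
    simp only [Finset.sum_add_distrib, Finset.sum_sub_distrib, ← Finset.mul_sum]
    rw [hkey r p, hkey s p, hkey r q, hkey s q, hg0 p, hg0 q]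
    ring
  have hij : ∀ i : Fin N, ∑ j, ∑ k, l i * (g j p * g k q - g j q * g k p) *
      ((v j r - v i r) * (v k s - v i s) - (v j s - v i s) * (v k r - v i r))
      = l i * (2 * ((if r = p then (1:ℝ) else 0) * (if s = q then 1 else 0)
           - (if r = q then (1:ℝ) else 0) * (if s = p then 1 else 0))) := by
    intro i
    have e : ∀ j k, l i * (g j p * g k q - g j q * g k p) *
        ((v j r - v i r) * (v k s - v i s) - (v j s - v i s) * (v k r - v i r))
      = l i * ((g j p * g k q - g j q * g k p) *
        ((v j r - v i r) * (v k s - v i s) - (v j s - v i s) * (v k r - v i r))) := fun j k => by ring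
    rw [Finset.sum_congr rfl fun j _ => Finset.sum_congr rfl fun k _ => e j k]
    simp only [← Finset.mul_sum]
    congr 1
    rw [Finset.sum_congr rfl fun j _ => hk i j, hj i]
  rw [Finset.sum_congr rfl fun i _ => hij i, ← Finset.sum_mul, hsum, one_mul]


lemma gbc_cross_comp (a : Fin 3) (u w : Fin 3 → ℝ) :
    (u ⨯₃ w) a = u ((![1,2,0] : Fin 3 → Fin 3) a) * w ((![2,0,1] : Fin 3 → Fin 3) a)
      - u ((![2,0,1] : Fin 3 → Fin 3) a) * w ((![1,2,0] : Fin 3 → Fin 3) a) := by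
  fin_cases a <;> simp [cross_apply]

/-- For generalized barycentric coordinates `{λ_i}` on a convex polyhedron `m ⊆ ℝ³`
(values `l i = λ_i(x)` and gradients `g i = ∇λ_i(x)` at a point, satisfying the four
barycentric identities), the identity
`(1/2) Σ_{i,j,k} λ_i (∇λ_j × ∇λ_k) ((v_j − v_i) × (v_k − v_i))ᵀ = I` holds. -/
theorem gbc_lnlxnl_reproduces_identity
    {N : ℕ} (v : Fin N → (Fin 3 → ℝ)) (x : Fin 3 → ℝ)
    (l : Fin N → ℝ) (g : Fin N → (Fin 3 → ℝ))
    (hnonneg : ∀ i, 0 ≤ l i)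
    (hsum : ∑ i, l i = 1)
    (hlin : ∑ i, l i • v i = x)
    (hgsum : ∑ i, g i = 0)
    (hgI : ∑ i, Matrix.vecMulVec (v i) (g i) = (1 : Matrix (Fin 3) (Fin 3) ℝ)) :
    (1 / 2 : ℝ) • ∑ i, ∑ j, ∑ k,
        Matrix.vecMulVec (l i • crossProduct (g j) (g k))
          (crossProduct (v j - v i) (v k - v i))
      = (1 : Matrix (Fin 3) (Fin 3) ℝ) := by
  have hkey : ∀ r p : Fin 3, ∑ i, v i r * g i p = if r = p then (1:ℝ) else 0 := by
    intro r p
    have h := congrFun (congrFun hgI r) p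
    simpa [Matrix.sum_apply, Matrix.vecMulVec_apply, Matrix.one_apply] using h
  have hg0 : ∀ p : Fin 3, ∑ i, g i p = 0 := by
    intro p
    have h := congrFun hgsum p
    simpa using h
  ext a b
  simp only [Matrix.smul_apply, Matrix.sum_apply, Matrix.vecMulVec_apply,
    Pi.smul_apply, smul_eq_mul, Matrix.one_apply]
  set σ : Fin 3 → Fin 3 := ![1,2,0] with hσ
  set τ : Fin 3 → Fin 3 := ![2,0,1] with hτ
  have e : ∀ i j k : Fin N,
      l i * (g j ⨯₃ g k) a * ((v j - v i) ⨯₃ (v k - v i)) b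
      = l i * (g j (σ a) * g k (τ a) - g j (τ a) * g k (σ a)) *
        ((v j (σ b) - v i (σ b)) * (v k (τ b) - v i (τ b))
          - (v j (τ b) - v i (τ b)) * (v k (σ b) - v i (σ b))) := by
    intro i j k
    rw [gbc_cross_comp a, gbc_cross_comp b]
    simp only [Pi.sub_apply, hσ, hτ]
  rw [Finset.sum_congr rfl fun i _ => Finset.sum_congr rfl fun j _ =>
      Finset.sum_congr rfl fun k _ => e i j k,
    gbc_master v g l hsum hg0 hkey (σ a) (τ a) (σ b) (τ b)]
  fin_cases a <;> fin_cases b <;> simp [hσ, hτ] <;> norm_num
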